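/- The Teia potential update condition holds for a lazy request served by the unmatched server: let (M,d) be a metric space, k ≥ 1, let s_1,…,s_k and a_1,…,a_k be points of M with s_j = a_j for every j ≠ 1, and let E_1,…,E_k ∈ ℝ. Suppose the request is r = a_1 and server 1 serves it. Define the new server positions ŝ by ŝ_1 = a_1 and ŝ_j = s_j for j ≠ 1, and the new handicaps Ê_j := E_j + α(a_1; s_1, s_j) for all j, where α(p;q,r) := (d(p,q)+d(p,r)−d(q,r))/2. Then Φ(ŝ,a,Ê) − Φ(s,a,E) + d(s_1,a_1) ≤ 0. -/

import Mathlib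

/-- The isolation index `α(p; q, r) = (d(p,q) + d(p,r) − d(q,r)) / 2`. -/
noncomputable def alpha {M : Type*} [MetricSpace M] (p q r : M) : ℝ :=
  (dist p q + dist p r - dist q r) / 2

/-- The Teia potential `Φ(s, a, E)`:
`Σ_{i<j} d(s_i,s_j) + k·Σ_i d(s_i,a_i) + 2·Σ_i (e_max − E_i)`,
where `ε^i = Σ_j α(s_j; a_j, s_i)`, `e_i = E_i − ε^i`, and
`e_max = max_i e_i`. -/
noncomputable def teiaPhi {M : Type*} [MetricSpace M] {k : ℕ}
    (s a : Fin k → M) (E : Fin k → ℝ) : ℝ :=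
  (∑ i : Fin k, ∑ j ∈ Finset.Ioi i, dist (s i) (s j))
    + k * ∑ i : Fin k, dist (s i) (a i)
    + 2 * ∑ i : Fin k,
        ((⨆ j : Fin k, (E j - ∑ l : Fin k, alpha (s l) (a l) (s j))) - E i)

/-- Update condition for a lazy request served by the unmatched server: the
request is `r = a_1`, server `1` moves to it, and the handicaps are updated by
`Ê_j = E_j + α(a_1; s_1, s_j)`.  Then `ΔΦ + cost_alg ≤ 0`. -/
theorem teiaPhi_lazy_request_open_server {M : Type*} [MetricSpace M] {k : ℕ}
    (hk : 1 ≤ k) (s a : Fin k → M) (E : Fin k → ℝ)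
    (h : ∀ j : Fin k, j ≠ ⟨0, hk⟩ → s j = a j) :
    teiaPhi (Function.update s ⟨0, hk⟩ (a ⟨0, hk⟩)) a
        (fun j => E j + alpha (a ⟨0, hk⟩) (s ⟨0, hk⟩) (s j))
      - teiaPhi s a E + dist (s ⟨0, hk⟩) (a ⟨0, hk⟩) ≤ 0 := by
  classical
  set i0 : Fin k := ⟨0, hk⟩ with hi0
  haveI : Nonempty (Fin k) := ⟨i0⟩
  have hbot : ∀ j : Fin k, i0 ≤ j := fun j => by
    rw [Fin.le_def]; exact Nat.zero_le _
  have hIoi : Finset.Ioi i0 = Finset.univ.erase i0 := by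
    ext j
    simp only [Finset.mem_Ioi, Finset.mem_erase, Finset.mem_univ, and_true]
    constructor
    · exact fun hj => hj.ne'
    · exact fun hj => lt_of_le_of_ne (hbot j) (Ne.symm hj)
  have hupd : Function.update s i0 (a i0) = a := by
    funext l
    rcases eq_or_ne l i0 with rfl | hl
    · simp
    · rw [Function.update_of_ne hl, h l hl]
  rw [hupd]
  set d1 := dist (s i0) (a i0) with hd1
  set A : Fin k → ℝ := fun j => alpha (s i0) (a i0) (s j) with hA
  have hA0 : A i0 = 0 := by
    simp [hA, alpha, dist_comm (a i0) (s i0)]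
  have hAB : ∀ j, alpha (a i0) (s i0) (s j) = d1 - A j := by
    intro j
    simp only [hA, alpha, hd1, dist_comm (a i0) (s i0)]
    ring
  have hsum_old : ∀ j, (∑ l : Fin k, alpha (s l) (a l) (s j)) = A j := by
    intro j
    rw [Finset.sum_eq_single i0]
    · intro l _ hl
      rw [h l hl]
      simp [alpha]
    · simp
  have hsum_new : ∀ j, (∑ l : Fin k, alpha (a l) (a l) (a j)) = 0 :=
    fun j => Finset.sum_eq_zero fun l _ => by simp [alpha]
  -- e and its sup
  set e : Fin k → ℝ := fun j => E j - A j with he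
  have hbdd : BddAbove (Set.range e) := (Set.finite_range e).bddAbove
  have hsup_new : (⨆ j : Fin k, ((fun j => E j + alpha (a i0) (s i0) (s j)) j
      - ∑ l : Fin k, alpha (a l) (a l) (a j))) = (⨆ j, e j) + d1 := by
    have hfun : ∀ j : Fin k, (fun j => E j + alpha (a i0) (s i0) (s j)) j
        - ∑ l : Fin k, alpha (a l) (a l) (a j) = e j + d1 := by
      intro j
      simp only [hsum_new, hAB, he]
      ring
    rw [iSup_congr hfun]
    apply le_antisymm
    · exact ciSup_le fun j => add_le_add_left (le_ciSup hbdd j) d1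
    · have h2 : (⨆ j, e j) ≤ (⨆ j, (e j + d1)) - d1 := by
        apply ciSup_le fun j => ?_
        have := le_ciSup ((Set.finite_range fun j => e j + d1).bddAbove) j
          (f := fun j => e j + d1)
        linarith
      linarith
  have hsup_old : (⨆ j : Fin k, (E j - ∑ l : Fin k, alpha (s l) (a l) (s j)))
      = ⨆ j, e j := by
    apply iSup_congr
    intro j
    rw [hsum_old j]
  -- the matched-distance sums
  have hQ_new : (∑ i : Fin k, dist (a i) (a i)) = 0 := by simp
  have hQ_old : (∑ i : Fin k, dist (s i) (a i)) = d1 := by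
    rw [Finset.sum_eq_single i0]
    · intro l _ hl; rw [h l hl]; simp
    · simp
  -- pairwise sums
  have hpair : ∀ i : Fin k, i ≠ i0 →
      (∑ j ∈ Finset.Ioi i, dist (a i) (a j)) = ∑ j ∈ Finset.Ioi i, dist (s i) (s j) := by
    intro i hi
    apply Finset.sum_congr rfl
    intro j hj
    have hj0 : j ≠ i0 := by
      intro hji
      exact absurd ((hji ▸ Finset.mem_Ioi.mp hj).trans_le (hbot i)) (lt_irrefl _)
    rw [h i hi, h j hj0]
  have hP : (∑ i : Fin k, ∑ j ∈ Finset.Ioi i, dist (a i) (a j))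
      - (∑ i : Fin k, ∑ j ∈ Finset.Ioi i, dist (s i) (s j))
      = ((k : ℝ) - 1) * d1 - 2 * ∑ j : Fin k, A j := by
    rw [← Finset.sum_sub_distrib]
    rw [Finset.sum_eq_single i0]
    · rw [← Finset.sum_sub_distrib, hIoi]
      have hterm : ∀ j ∈ Finset.univ.erase i0,
          dist (a i0) (a j) - dist (s i0) (s j) = d1 - 2 * A j := by
        intro j hj
        have hj0 : j ≠ i0 := (Finset.mem_erase.mp hj).1
        rw [← h j hj0]
        simp only [hA, alpha, hd1]
        ring
      rw [Finset.sum_congr rfl hterm, Finset.sum_sub_distrib, Finset.sum_const,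
        Finset.card_erase_of_mem (Finset.mem_univ _), Finset.card_univ, Fintype.card_fin,
        Finset.sum_erase _ (by rw [hA0, mul_zero]),
        ← Finset.mul_sum, nsmul_eq_mul]
      have : ((k - 1 : ℕ) : ℝ) = (k : ℝ) - 1 := by
        push_cast [Nat.cast_sub hk]; ring
      rw [this]
    · intro i _ hi
      rw [hpair i hi, sub_self]
    · simp
  -- now assemble
  simp only [teiaPhi, hsup_new, hsup_old, hQ_new, hQ_old]
  have hsumT : (∑ i : Fin k, ((⨆ j, e j) + d1 - (E i + alpha (a i0) (s i0) (s i))))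
      = (∑ i : Fin k, ((⨆ j, e j) - E i)) + ∑ i : Fin k, A i := by
    rw [← Finset.sum_add_distrib]
    apply Finset.sum_congr rfl
    intro i _
    rw [hAB i]
    ring
  rw [hsumT]
  have hk' : (1 : ℝ) ≤ (k : ℝ) := by exact_mod_cast hk
  nlinarith [hP]
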